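/- Decrease bound for the strong Lyapunov function of the heavy ball method: let ψ > 0 be such that ν := ψ(ψ - λ) < 0, and set a(z₁) := γ(L(z₁) - L*), b(z₁, z₂) := ½‖ψ(z₁ - z₁*) + z₂‖², c(z₁) := ½‖z₁ - z₁*‖². Then along every solution of the heavy ball system, for all t ≥ 0, d/dt [V(z₁(t), z₂(t))] ≤ -ψ·(a(z₁(t)) + 2ν·c(z₁(t))) + 2(ψ - λ)·b(z₁(t), z₂(t)). -/

import Mathlib

open scoped RealInnerProductSpace

noncomputable section

lemma grad_convex_ineq {n : ℕ} (L : EuclideanSpace ℝ (Fin n) → ℝ)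
    (hC1 : ContDiff ℝ 1 L) (hconv : ConvexOn ℝ Set.univ L)
    (x y : EuclideanSpace ℝ (Fin n)) :
    ⟪gradient L x, y - x⟫ ≤ L y - L x := by
  have hF : HasFDerivAt L (InnerProductSpace.toDual ℝ _ (gradient L x)) x :=
    hasGradientAt_iff_hasFDerivAt.mp ((hC1.differentiable one_ne_zero x).hasGradientAt)
  set c : ℝ → EuclideanSpace ℝ (Fin n) := fun t => x + t • (y - x) with hc_def
  have hc : HasDerivAt c (y - x) 0 := by
    have h := ((hasDerivAt_id (0:ℝ)).smul_const (y - x)).const_add x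
    rw [one_smul] at h; exact h
  have hc0 : c 0 = x := by simp [hc_def]
  have hF2 : HasFDerivAt L (InnerProductSpace.toDual ℝ _ (gradient L x)) (c 0) := by
    rw [hc0]; exact hF
  have hφ : HasDerivAt (fun t => L (c t)) ⟪gradient L x, y - x⟫ 0 := by
    have := hF2.comp_hasDerivAt 0 hc
    rw [InnerProductSpace.toDual_apply_apply] at this; exact this
  have hsl : Filter.Tendsto (slope (fun t => L (c t)) 0) (nhdsWithin 0 (Set.Ioi 0))
      (nhds ⟪gradient L x, y - x⟫) :=
    (hasDerivAt_iff_tendsto_slope.mp hφ).mono_left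
      (nhdsWithin_mono _ fun t ht => Set.mem_compl_singleton_iff.mpr (ne_of_gt ht))
  refine le_of_tendsto hsl ?_
  filter_upwards [Ioo_mem_nhdsGT_of_mem (Set.left_mem_Ico.mpr one_pos)] with t ht
  have hcomb : c t = (1 - t) • x + t • y := by
    rw [hc_def]; simp only; rw [smul_sub, sub_smul, one_smul]; abel
  have hcv : L (c t) ≤ (1 - t) * L x + t * L y := by
    rw [hcomb]
    exact hconv.2 (Set.mem_univ x) (Set.mem_univ y) (by linarith [ht.2]) ht.1.le (by ring)
  rw [slope_def_field]
  rw [hc0, sub_zero, div_le_iff₀ ht.1]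
  nlinarith [hcv]

/-- Decrease bound for the strong Lyapunov function of the heavy ball method:
`d/dt V(z(t)) ≤ -ψ(a + 2νc) + 2(ψ - λ)b` along solutions, where `ν = ψ(ψ - λ)`. -/
theorem heavyBall_strong_lyapunov_decrease {n : ℕ} (hn : 1 ≤ n)
    (L : EuclideanSpace ℝ (Fin n) → ℝ)
    (hC1 : ContDiff ℝ 1 L)
    (hconv : ConvexOn ℝ Set.univ L)
    (zs : EuclideanSpace ℝ (Fin n))
    (hmin : ∀ z, L zs ≤ L z)
    (huniq : ∀ z, (∀ y, L z ≤ L y) → z = zs)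
    (lam γ ψ : ℝ) (hlam : 0 < lam) (hγ : 0 < γ) (hψ : 0 < ψ)
    (hν : ψ * (ψ - lam) < 0)
    (z₁ z₂ : ℝ → EuclideanSpace ℝ (Fin n))
    (hz₁ : ∀ t, 0 ≤ t → HasDerivAt z₁ (z₂ t) t)
    (hz₂ : ∀ t, 0 ≤ t →
      HasDerivAt z₂ (-(lam • z₂ t) - γ • gradient L (z₁ t)) t) :
    ∀ t, 0 ≤ t →
      deriv (fun s =>
          γ * (L (z₁ s) - L zs) + (1 / 2) * ‖ψ • (z₁ s - zs) + z₂ s‖ ^ 2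
            + (ψ * (ψ - lam) / 2) * ‖z₁ s - zs‖ ^ 2) t
        ≤ -ψ * (γ * (L (z₁ t) - L zs)
              + 2 * (ψ * (ψ - lam)) * ((1 / 2) * ‖z₁ t - zs‖ ^ 2))
          + 2 * (ψ - lam) * ((1 / 2) * ‖ψ • (z₁ t - zs) + z₂ t‖ ^ 2) := by
  intro t ht
  have hdz₁ := hz₁ t ht
  have hdz₂ := hz₂ t ht
  set g := gradient L (z₁ t) with hg_def
  have hLd : HasFDerivAt L (InnerProductSpace.toDual ℝ _ g) (z₁ t) :=
    hasGradientAt_iff_hasFDerivAt.mp ((hC1.differentiable one_ne_zero (z₁ t)).hasGradientAt)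
  have h1 : HasDerivAt (fun s => L (z₁ s)) ⟪g, z₂ t⟫ t := by
    have h := hLd.comp_hasDerivAt t hdz₁
    rw [InnerProductSpace.toDual_apply_apply] at h; exact h
  have hdsub : HasDerivAt (fun s => z₁ s - zs) (z₂ t) t := hdz₁.sub_const zs
  have hw : HasDerivAt (fun s => ψ • (z₁ s - zs) + z₂ s)
      (ψ • z₂ t + (-(lam • z₂ t) - γ • g)) t :=
    (hdsub.const_smul ψ).add hdz₂
  have hw2 : HasDerivAt (fun s => ‖ψ • (z₁ s - zs) + z₂ s‖ ^ 2)
      (⟪ψ • (z₁ t - zs) + z₂ t, ψ • z₂ t + (-(lam • z₂ t) - γ • g)⟫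
        + ⟪ψ • z₂ t + (-(lam • z₂ t) - γ • g), ψ • (z₁ t - zs) + z₂ t⟫) t := by
    have := hw.inner ℝ hw
    simp only [real_inner_self_eq_norm_sq] at this
    exact this
  have hc2 : HasDerivAt (fun s => ‖z₁ s - zs‖ ^ 2)
      (⟪z₁ t - zs, z₂ t⟫ + ⟪z₂ t, z₁ t - zs⟫) t := by
    have := hdsub.inner ℝ hdsub
    simp only [real_inner_self_eq_norm_sq] at this
    exact this
  have hsum : HasDerivAt (fun s =>
      γ * (L (z₁ s) - L zs) + (1 / 2) * ‖ψ • (z₁ s - zs) + z₂ s‖ ^ 2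
        + (ψ * (ψ - lam) / 2) * ‖z₁ s - zs‖ ^ 2)
      (γ * ⟪g, z₂ t⟫
        + (1 / 2) * (⟪ψ • (z₁ t - zs) + z₂ t, ψ • z₂ t + (-(lam • z₂ t) - γ • g)⟫
            + ⟪ψ • z₂ t + (-(lam • z₂ t) - γ • g), ψ • (z₁ t - zs) + z₂ t⟫)
        + (ψ * (ψ - lam) / 2) * (⟪z₁ t - zs, z₂ t⟫ + ⟪z₂ t, z₁ t - zs⟫)) t :=
    (((h1.sub_const (L zs)).const_mul γ).add (hw2.const_mul (1/2))).add
      (hc2.const_mul (ψ * (ψ - lam) / 2))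
  rw [hsum.deriv]
  have hkey : L (z₁ t) - L zs ≤ ⟪g, z₁ t - zs⟫ := by
    have := grad_convex_ineq L hC1 hconv (z₁ t) zs
    have h2 : ⟪g, zs - z₁ t⟫ = -⟪g, z₁ t - zs⟫ := by
      rw [← inner_neg_right]; congr 1; abel
    rw [← hg_def] at this
    linarith [h2 ▸ this]
  have hkey2 : ψ * γ * (L (z₁ t) - L zs) ≤ ψ * γ * ⟪g, z₁ t - zs⟫ :=
    mul_le_mul_of_nonneg_left hkey (mul_pos hψ hγ).le
  simp only [← real_inner_self_eq_norm_sq]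
  simp only [inner_add_left, inner_add_right, inner_sub_left, inner_sub_right,
    real_inner_smul_left, real_inner_smul_right, inner_neg_left, inner_neg_right]
  simp only [inner_sub_right] at hkey2
  rw [real_inner_comm (z₂ t) (z₁ t), real_inner_comm (z₂ t) zs,
    real_inner_comm (z₁ t) g, real_inner_comm zs g, real_inner_comm (z₂ t) g,
    real_inner_comm zs (z₁ t)]
  have hkey3 := hkey2
  rw [real_inner_comm (z₁ t) g, real_inner_comm zs g] at hkey3
  linarith [hkey2, hkey3]
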